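/- Let $n\ge 1$, $K=\mathbb{C}(z_1,\dots,z_n)$, $\Theta_n(X)=\prod_{j=1}^n(1-z_jX)$, $G_a(X)=\prod_{j<a}(1+z_jX)\prod_{j>a}(1-z_jX)$, and $A_a(t)=\frac{z_a t}{1-z_a t}\prod_{j>a}\frac{1+z_j t}{1-z_j t}$. Then $\sum_{a=1}^n A_a(t)\,G_a(X)=F_n(t|X)$, where $F_n(t|X)=\frac{t}{2(X-t)}\cdot\frac{\Theta_n(t)\Theta_n(-X)-\Theta_n(-t)\Theta_n(X)}{\Theta_n(t)}$, as rational functions in $z_1,\dots,z_n,t,X$. -/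

import Mathlib

open Finset

private lemma tele8 {R : Type*} [CommRing R] (p q : ℕ → R) (n : ℕ) :
    ∑ k ∈ range n, (∏ j ∈ range k, p j) * (p k - q k) * (∏ j ∈ Ico (k+1) n, q j)
      = ∏ j ∈ range n, p j - ∏ j ∈ range n, q j := by
  have : ∑ k ∈ range n, (∏ j ∈ range k, p j) * (p k - q k) * (∏ j ∈ Ico (k+1) n, q j)
      = ∑ k ∈ range n, ((∏ j ∈ range (k+1), p j) * ∏ j ∈ Ico (k+1) n, q j
          - (∏ j ∈ range k, p j) * ∏ j ∈ Ico k n, q j) := by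
    refine Finset.sum_congr rfl fun k hk => ?_
    rw [Finset.prod_range_succ, Finset.prod_eq_prod_Ico_succ_bot (mem_range.mp hk)]
    ring
  rw [this, Finset.sum_range_sub (f := fun k => (∏ j ∈ range k, p j) * ∏ j ∈ Ico k n, q j)]
  rw [Finset.range_eq_Ico]
  simp

private lemma decomp8 {M : Type*} [CommMonoid M] {n : ℕ} (a : Fin n) (g : Fin n → M) :
    ∏ j, g j = g a * ((∏ j ∈ Ioi a, g j) * ∏ j ∈ Iio a, g j) := by
  have h1 : Disjoint (Ioi a) (Iio a) := Finset.disjoint_Ioi_Iio a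
  have h2 : Disjoint {a} (Ioi a ∪ Iio a) := by
    simp only [Finset.disjoint_left, Finset.mem_singleton, Finset.mem_union,
      Finset.mem_Ioi, Finset.mem_Iio]
    rintro x rfl
    simp
  have hu : (univ : Finset (Fin n)) = {a} ∪ (Ioi a ∪ Iio a) := by
    ext j
    simp only [Finset.mem_univ, Finset.mem_union, Finset.mem_singleton,
      Finset.mem_Ioi, Finset.mem_Iio, true_iff]
    rcases lt_trichotomy a j with h | h | h
    · exact Or.inr (Or.inl h)
    · exact Or.inl h.symm
    · exact Or.inr (Or.inr h)
  rw [hu, Finset.prod_union h2, Finset.prod_union h1, Finset.prod_singleton]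

private lemma key8 {K : Type*} [Field K] (n : ℕ) (z : Fin n → K) (t X : K)
    (hz : ∀ a : Fin n, 1 - z a * t ≠ 0) (hXt : 2 * (X - t) ≠ 0) :
    ∑ a : Fin n, ((z a * t) / (1 - z a * t) * ∏ j ∈ Ioi a, (1 + z j * t) / (1 - z j * t)) *
        ((∏ j ∈ Iio a, (1 + z j * X)) * ∏ j ∈ Ioi a, (1 - z j * X)) =
      t / (2 * (X - t)) *
        (((∏ j, (1 - z j * t)) * (∏ j, (1 - z j * (-X)))
          - (∏ j, (1 - z j * (-t))) * ∏ j, (1 - z j * X)) / ∏ j, (1 - z j * t)) := by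
  have hΘ : (∏ j, (1 - z j * t)) ≠ 0 := Finset.prod_ne_zero_iff.mpr fun j _ => hz j
  -- rewrite each summand with common denominator Θt
  have hterm : ∀ a : Fin n,
      ((z a * t) / (1 - z a * t) * ∏ j ∈ Ioi a, (1 + z j * t) / (1 - z j * t)) *
        ((∏ j ∈ Iio a, (1 + z j * X)) * ∏ j ∈ Ioi a, (1 - z j * X)) =
      (z a * t * ((∏ j ∈ Iio a, ((1 - z j * t) * (1 + z j * X)))
        * ∏ j ∈ Ioi a, ((1 + z j * t) * (1 - z j * X)))) / ∏ j, (1 - z j * t) := by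
    intro a
    have hD : (1 - z a * t) * ∏ j ∈ Ioi a, (1 - z j * t) ≠ 0 :=
      mul_ne_zero (hz a) (Finset.prod_ne_zero_iff.mpr fun j _ => hz j)
    rw [Finset.prod_div_distrib, div_mul_div_comm, div_mul_eq_mul_div,
      div_eq_div_iff hD hΘ, decomp8 a (fun j => 1 - z j * t),
      Finset.prod_mul_distrib, Finset.prod_mul_distrib]
    ring
  rw [Finset.sum_congr rfl fun a _ => hterm a, ← Finset.sum_div, div_mul_div_comm,
    div_eq_div_iff hΘ (mul_ne_zero hXt hΘ)]
  -- reduce to polynomial identity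
  suffices h : (∑ a : Fin n, z a * t * ((∏ j ∈ Iio a, ((1 - z j * t) * (1 + z j * X)))
        * ∏ j ∈ Ioi a, ((1 + z j * t) * (1 - z j * X)))) * (2 * (X - t)) =
      t * ((∏ j, (1 - z j * t)) * (∏ j, (1 - z j * (-X)))
          - (∏ j, (1 - z j * (-t))) * ∏ j, (1 - z j * X)) by
    linear_combination (∏ j, (1 - z j * t)) * h
  -- pass to ℕ-indexed products
  set w : ℕ → K := fun k => if h : k < n then z ⟨k, h⟩ else 0 with hw
  have hwz : ∀ a : Fin n, w (a : ℕ) = z a := fun a => by simp [hw, a.isLt]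
  set p : ℕ → K := fun k => (1 - w k * t) * (1 + w k * X) with hp
  set q : ℕ → K := fun k => (1 + w k * t) * (1 - w k * X) with hq
  have hIio : ∀ a : Fin n, (∏ j ∈ Iio a, ((1 - z j * t) * (1 + z j * X)))
      = ∏ k ∈ range (a : ℕ), p k := by
    intro a
    rw [← Nat.Iio_eq_range, ← Fin.map_valEmbedding_Iio, Finset.prod_map]
    exact Finset.prod_congr rfl fun j _ => by simp [hp, hwz]
  have hIoi : ∀ a : Fin n, (∏ j ∈ Ioi a, ((1 + z j * t) * (1 - z j * X)))
      = ∏ k ∈ Ico ((a : ℕ) + 1) n, q k := by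
    intro a
    have : Ico ((a : ℕ) + 1) n = Finset.Ioo (a : ℕ) n := by
      ext k
      simp only [mem_Ico, mem_Ioo]
      omega
    rw [this, ← Fin.map_valEmbedding_Ioi, Finset.prod_map]
    exact Finset.prod_congr rfl fun j _ => by simp [hq, hwz]
  have huniv : ∀ (u v : K), (∏ j, ((1 - z j * u) * (1 + z j * v)))
      = ∏ k ∈ range n, ((1 - w k * u) * (1 + w k * v)) := by
    intro u v
    rw [← Fin.prod_univ_eq_prod_range (fun k => (1 - w k * u) * (1 + w k * v)) n]
    exact Finset.prod_congr rfl fun j _ => by rw [hwz]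
  have h1 : (∏ j, (1 - z j * t)) * (∏ j, (1 - z j * (-X))) = ∏ k ∈ range n, p k := by
    rw [← Finset.prod_mul_distrib, hp]
    rw [show (∏ j, ((1 - z j * t) * (1 - z j * (-X)))) = ∏ j, ((1 - z j * t) * (1 + z j * X))
      from Finset.prod_congr rfl fun j _ => by ring, huniv t X]
  have h2 : (∏ j, (1 - z j * (-t))) * (∏ j, (1 - z j * X)) = ∏ k ∈ range n, q k := by
    rw [← Finset.prod_mul_distrib, hq]
    rw [show (∏ j, ((1 - z j * (-t)) * (1 - z j * X)))
        = ∏ j, ((1 - z j * X) * (1 + z j * t))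
      from Finset.prod_congr rfl fun j _ => by ring, huniv X t]
    exact Finset.prod_congr rfl fun k _ => by ring
  rw [h1, h2, ← tele8 p q n, Finset.sum_mul, Finset.mul_sum]
  rw [← Fin.sum_univ_eq_sum_range (fun k => t * ((∏ j ∈ range k, p j) * (p k - q k)
    * (∏ j ∈ Ico (k+1) n, q j))) n]
  refine Finset.sum_congr rfl fun a _ => ?_
  rw [hIio a, hIoi a]
  have hpq : p (a : ℕ) - q (a : ℕ) = 2 * z a * (X - t) := by
    simp only [hp, hq, hwz]; ring
  rw [hpq]
  ring

theorem stmt8 (n : ℕ) (hn : 1 ≤ n) :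
    let L := FractionRing (MvPolynomial (Fin (n + 2)) ℂ)
    let alg := algebraMap (MvPolynomial (Fin (n + 2)) ℂ) L
    let z : Fin n → L := fun j => alg (MvPolynomial.X ⟨j, by omega⟩)
    let t : L := alg (MvPolynomial.X ⟨n, by omega⟩)
    let Xv : L := alg (MvPolynomial.X ⟨n + 1, by omega⟩)
    let Θ : L → L := fun x => ∏ j : Fin n, (1 - z j * x)
    let G : Fin n → L → L := fun a x =>
      (∏ j ∈ Finset.Iio a, (1 + z j * x)) * ∏ j ∈ Finset.Ioi a, (1 - z j * x)
    let A : Fin n → L := fun a =>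
      (z a * t) / (1 - z a * t) * ∏ j ∈ Finset.Ioi a, (1 + z j * t) / (1 - z j * t)
    ∑ a : Fin n, A a * G a Xv =
      t / (2 * (Xv - t)) * ((Θ t * Θ (-Xv) - Θ (-t) * Θ Xv) / Θ t) := by
  intro L alg z t Xv Θ G A
  have hinj : Function.Injective alg := IsFractionRing.injective _ _
  have halg : ∀ p : MvPolynomial (Fin (n + 2)) ℂ,
      MvPolynomial.eval (fun i : Fin (n + 2) => if (i : ℕ) = n + 1 then (1 : ℂ) else 0) p ≠ 0 →
        alg p ≠ 0 := by
    intro p hp h0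
    exact hp (by rw [hinj (by rw [h0, map_zero] : alg p = alg 0), map_zero])
  have hz : ∀ a : Fin n, 1 - z a * t ≠ 0 := by
    intro a
    have h : (1 : L) - z a * t
        = alg (1 - MvPolynomial.X ⟨a, by omega⟩ * MvPolynomial.X ⟨n, by omega⟩) := by
      simp [z, t]
    rw [h]
    apply halg
    have ha : ((⟨(a : ℕ), by omega⟩ : Fin (n + 2)) : ℕ) ≠ n + 1 := by
      have := a.isLt; simp; omega
    have hb : ((⟨n, by omega⟩ : Fin (n + 2)) : ℕ) ≠ n + 1 := by simp
    simp [ha, hb]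
  have hXt : 2 * (Xv - t) ≠ 0 := by
    have h : 2 * (Xv - t)
        = alg (2 * (MvPolynomial.X ⟨n + 1, by omega⟩ - MvPolynomial.X ⟨n, by omega⟩)) := by
      rw [map_mul, map_sub, map_ofNat]
    rw [h]
    apply halg
    have hb : ((⟨n, by omega⟩ : Fin (n + 2)) : ℕ) ≠ n + 1 := by simp
    simp [hb]
  exact key8 n z t Xv hz hXt
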